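/- Let k be a field with char k ≠ 2 and let A be a k-algebra equipped with a ℤ/2-grading 𝒜 : ZMod 2 → Submodule k A making A a graded algebra, which is super-commutative in the sense that a * b = (−1)^{i·j} • (b * a) for all a ∈ 𝒜 i and b ∈ 𝒜 j. Let ε : A → k be a k-algebra homomorphism and let A⁺ := ker ε. Then the odd component of the square of the augmentation ideal equals A₀⁺·A₁: as k-submodules of A, (A⁺ · A⁺) ⊓ 𝒜 1 = (𝒜 0 ⊓ A⁺) · (𝒜 1). -/

import Mathlib

open DirectSum

/-- For a super-commutative `ℤ/2`-graded algebra `A` over a field `k` of characteristic `≠ 2`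
with augmentation `ε : A → k` and augmentation ideal `A⁺ = ker ε`, the odd component of
`(A⁺)²` equals `A₀⁺ · A₁`:  `(A⁺ * A⁺) ⊓ 𝒜 1 = (𝒜 0 ⊓ A⁺) * 𝒜 1`. -/
theorem superCommutative_augmentationIdeal_sq_odd
    (k : Type*) [Field k] (hchar : ringChar k ≠ 2)
    (A : Type*) [Ring A] [Algebra k A]
    (𝒜 : ZMod 2 → Submodule k A) [GradedAlgebra 𝒜]
    (hsc : ∀ (i j : ZMod 2), ∀ a ∈ 𝒜 i, ∀ b ∈ 𝒜 j,
      a * b = ((-1 : ℤ) ^ (i.val * j.val)) • (b * a))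
    (ε : A →ₐ[k] k) :
    letI Aplus : Submodule k A := (RingHom.ker ε).restrictScalars k
    (Aplus * Aplus) ⊓ 𝒜 1 = ((𝒜 0) ⊓ Aplus) * (𝒜 1) := by
  letI Aplus : Submodule k A := (RingHom.ker ε).restrictScalars k
  show (Aplus * Aplus) ⊓ 𝒜 1 = ((𝒜 0) ⊓ Aplus) * (𝒜 1)
  classical
  have h2 : (2 : k) ≠ 0 := Ring.two_ne_zero hchar
  -- odd elements are in the augmentation ideal
  have hodd : ∀ c ∈ 𝒜 1, ε c = 0 := by
    intro c hc
    have h := hsc 1 1 c hc c hc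
    have h1 : ((1 : ZMod 2).val * (1 : ZMod 2).val) = 1 := by decide
    rw [h1, pow_one, neg_one_zsmul] at h
    have hc2 : ε c * ε c = 0 := by
      have := congrArg ε h
      rw [map_mul, map_neg, map_mul] at this
      have h2' : (2 : k) * (ε c * ε c) = 0 := by linear_combination this
      rcases mul_eq_zero.mp h2' with h | h
      · exact absurd h h2
      · exact h
    exact mul_self_eq_zero.mp hc2
  have hdec : ∀ a : A, a = (decompose 𝒜 a 0 : A) + (decompose 𝒜 a 1 : A) := by
    intro a
    conv_lhs => rw [← DirectSum.sum_support_decompose 𝒜 a]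
    rw [Finset.sum_subset (Finset.subset_univ _) (by
      intro x _ hx
      rw [DFinsupp.notMem_support_iff.mp hx, ZeroMemClass.coe_zero])]
    rw [show (Finset.univ : Finset (ZMod 2)) = {0, 1} by decide,
      Finset.sum_insert (by decide), Finset.sum_singleton]
  apply le_antisymm
  · -- ⊆
    have key : Aplus * Aplus ≤
        (((𝒜 0) ⊓ Aplus) * (𝒜 1)).comap (GradedAlgebra.proj 𝒜 1) := by
      apply Submodule.mul_le.mpr
      intro a ha b hb
      have ha0 : (decompose 𝒜 a 0 : A) ∈ 𝒜 0 := SetLike.coe_mem _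
      have ha1 : (decompose 𝒜 a 1 : A) ∈ 𝒜 1 := SetLike.coe_mem _
      have hb0 : (decompose 𝒜 b 0 : A) ∈ 𝒜 0 := SetLike.coe_mem _
      have hb1 : (decompose 𝒜 b 1 : A) ∈ 𝒜 1 := SetLike.coe_mem _
      have haker : ε a = 0 := ha
      have hbker : ε b = 0 := hb
      have ha0k : ε (decompose 𝒜 a 0 : A) = 0 := by
        have := congrArg ε (hdec a)
        rw [haker, map_add, hodd _ ha1, add_zero] at this
        exact this.symm
      have hb0k : ε (decompose 𝒜 b 0 : A) = 0 := by
        have := congrArg ε (hdec b)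
        rw [hbker, map_add, hodd _ hb1, add_zero] at this
        exact this.symm
      -- split the product
      have hmul : a * b =
          ((decompose 𝒜 a 0 : A) * (decompose 𝒜 b 0 : A)
            + (decompose 𝒜 a 1 : A) * (decompose 𝒜 b 1 : A))
          + ((decompose 𝒜 a 0 : A) * (decompose 𝒜 b 1 : A)
            + (decompose 𝒜 a 1 : A) * (decompose 𝒜 b 0 : A)) := by
        conv_lhs => rw [hdec a, hdec b]
        noncomm_ring
      have heven : ((decompose 𝒜 a 0 : A) * (decompose 𝒜 b 0 : A)
            + (decompose 𝒜 a 1 : A) * (decompose 𝒜 b 1 : A)) ∈ 𝒜 0 := by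
        apply add_mem
        · simpa using SetLike.mul_mem_graded ha0 hb0
        · have := SetLike.mul_mem_graded ha1 hb1
          rwa [show (1 : ZMod 2) + 1 = 0 by decide] at this
      have hoddm : ((decompose 𝒜 a 0 : A) * (decompose 𝒜 b 1 : A)
            + (decompose 𝒜 a 1 : A) * (decompose 𝒜 b 0 : A)) ∈ 𝒜 1 := by
        apply add_mem
        · simpa using SetLike.mul_mem_graded ha0 hb1
        · have := SetLike.mul_mem_graded ha1 hb0
          rwa [show (1 : ZMod 2) + 0 = 1 by decide] at this
      simp only [Submodule.mem_comap, GradedAlgebra.proj_apply, hmul]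
      rw [decompose_add, DirectSum.add_apply, Submodule.coe_add,
        decompose_of_mem_ne 𝒜 heven (by decide : (0 : ZMod 2) ≠ 1),
        decompose_of_mem_same 𝒜 hoddm, zero_add]
      apply add_mem
      · exact Submodule.mul_mem_mul ⟨ha0, ha0k⟩ hb1
      · have hcomm := hsc 1 0 _ ha1 _ hb0
        rw [show ((1 : ZMod 2).val * (0 : ZMod 2).val) = 0 by decide, pow_zero,
          one_smul] at hcomm
        rw [hcomm]
        exact Submodule.mul_mem_mul ⟨hb0, hb0k⟩ ha1
    rintro x ⟨hxM, hx1⟩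
    have := key hxM
    rw [Submodule.mem_comap, GradedAlgebra.proj_apply,
      decompose_of_mem_same 𝒜 hx1] at this
    exact this
  · -- ⊇
    apply le_inf
    · apply Submodule.mul_le.mpr
      rintro a ⟨-, haker⟩ b hb
      exact Submodule.mul_mem_mul haker (hodd b hb)
    · apply Submodule.mul_le.mpr
      rintro a ⟨ha0, -⟩ b hb
      simpa using SetLike.mul_mem_graded ha0 hb
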